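/- Among observable pairs (I,J) of s-subsets of [n] where each of I and J is contained in some interval of length s+t, the number of pairs (P,Q) of this type with (P ∪ Q) ∩ I ≠ ∅ is at most 2·s·(s+t)·n·C(s+t, s)^2. -/

import Mathlib

open scoped Classical

/-- A pair `(P, Q)` of subsets of `[n]` is observable if, under increasing
enumeration, the `k`-th element of `P` is strictly smaller than the `k`-th
element of `Q`, for every `k` (stated for subsets of common cardinality `s`). -/
def Observable {n : ℕ} (s : ℕ) (P Q : Finset (Fin n)) : Prop :=
  ∀ k, k < s →
    ∀ (h1 : k < (P.sort (· ≤ ·)).length) (h2 : k < (Q.sort (· ≤ ·)).length),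
      (P.sort (· ≤ ·))[k] < (Q.sort (· ≤ ·))[k]

/-- `P` is contained in an interval of length `m`. -/
def InInterval {n : ℕ} (m : ℕ) (P : Finset (Fin n)) : Prop :=
  ∃ a : ℕ, ∀ p ∈ P, a ≤ (p : ℕ) ∧ (p : ℕ) < a + m

lemma interval_card_le (n m a : ℕ) :
    (Finset.univ.filter (fun p : Fin n => a ≤ (p : ℕ) ∧ (p : ℕ) < a + m)).card ≤ m := by
  have h : (Finset.univ.filter (fun p : Fin n => a ≤ (p : ℕ) ∧ (p : ℕ) < a + m)).card
      ≤ (Finset.Ico a (a + m)).card := by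
    refine Finset.card_le_card_of_injOn (fun p => (p : ℕ)) (fun p hp => ?_)
      (fun p _ q _ h => Fin.val_injective h)
    simp only [Finset.mem_coe, Finset.mem_filter] at hp
    simp only [Finset.mem_coe, Finset.mem_Ico]
    omega
  rw [Nat.card_Ico] at h
  omega

lemma B_bound (n s t : ℕ) (hs : 0 < s) :
    ((Finset.univ.powersetCard s).filter
        (fun Q : Finset (Fin n) => InInterval (s + t) Q)).card
      ≤ n * Nat.choose (s + t) s := by
  classical
  have hsub : ((Finset.univ.powersetCard s).filter
        (fun Q : Finset (Fin n) => InInterval (s + t) Q))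
      ⊆ (Finset.range n).biUnion (fun a =>
          (Finset.univ.filter
            (fun p : Fin n => a ≤ (p : ℕ) ∧ (p : ℕ) < a + (s + t))).powersetCard s) := by
    intro Q hQ
    simp only [Finset.mem_filter, Finset.mem_powersetCard] at hQ
    obtain ⟨⟨-, hcard⟩, a, ha⟩ := hQ
    have hQne : Q.Nonempty := Finset.card_pos.mp (by omega)
    obtain ⟨q, hq⟩ := hQne
    have han : a < n := lt_of_le_of_lt (ha q hq).1 q.isLt
    simp only [Finset.mem_biUnion, Finset.mem_range, Finset.mem_powersetCard]
    refine ⟨a, han, fun p hp => ?_, hcard⟩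
    simp only [Finset.mem_filter, Finset.mem_univ, true_and]
    exact ha p hp
  calc ((Finset.univ.powersetCard s).filter
        (fun Q : Finset (Fin n) => InInterval (s + t) Q)).card
      ≤ _ := Finset.card_le_card hsub
    _ ≤ ∑ a ∈ Finset.range n,
        ((Finset.univ.filter
            (fun p : Fin n => a ≤ (p : ℕ) ∧ (p : ℕ) < a + (s + t))).powersetCard s).card :=
      Finset.card_biUnion_le
    _ ≤ ∑ a ∈ Finset.range n, Nat.choose (s + t) s := by
      refine Finset.sum_le_sum fun a _ => ?_
      rw [Finset.card_powersetCard]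
      exact Nat.choose_le_choose s (interval_card_le n (s + t) a)
    _ = n * Nat.choose (s + t) s := by
      rw [Finset.sum_const, Finset.card_range, smul_eq_mul]

lemma A_bound (n s t : ℕ) (i : Fin n) :
    ((Finset.univ.powersetCard s).filter
        (fun P : Finset (Fin n) => InInterval (s + t) P ∧ i ∈ P)).card
      ≤ (s + t) * Nat.choose (s + t) s := by
  classical
  have hsub : ((Finset.univ.powersetCard s).filter
        (fun P : Finset (Fin n) => InInterval (s + t) P ∧ i ∈ P))
      ⊆ (Finset.Ico ((i : ℕ) + 1 - (s + t)) ((i : ℕ) + 1)).biUnion (fun a =>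
          (Finset.univ.filter
            (fun p : Fin n => a ≤ (p : ℕ) ∧ (p : ℕ) < a + (s + t))).powersetCard s) := by
    intro P hP
    simp only [Finset.mem_filter, Finset.mem_powersetCard] at hP
    obtain ⟨⟨-, hcard⟩, ⟨a, ha⟩, hiP⟩ := hP
    have hai := ha i hiP
    simp only [Finset.mem_biUnion, Finset.mem_Ico, Finset.mem_powersetCard]
    refine ⟨a, ⟨by omega, by omega⟩, fun p hp => ?_, hcard⟩
    simp only [Finset.mem_filter, Finset.mem_univ, true_and]
    exact ha p hp
  calc ((Finset.univ.powersetCard s).filter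
        (fun P : Finset (Fin n) => InInterval (s + t) P ∧ i ∈ P)).card
      ≤ _ := Finset.card_le_card hsub
    _ ≤ ∑ a ∈ Finset.Ico ((i : ℕ) + 1 - (s + t)) ((i : ℕ) + 1),
        ((Finset.univ.filter
            (fun p : Fin n => a ≤ (p : ℕ) ∧ (p : ℕ) < a + (s + t))).powersetCard s).card :=
      Finset.card_biUnion_le
    _ ≤ ∑ a ∈ Finset.Ico ((i : ℕ) + 1 - (s + t)) ((i : ℕ) + 1), Nat.choose (s + t) s := by
      refine Finset.sum_le_sum fun a _ => ?_
      rw [Finset.card_powersetCard]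
      exact Nat.choose_le_choose s (interval_card_le n (s + t) a)
    _ ≤ (s + t) * Nat.choose (s + t) s := by
      rw [Finset.sum_const, Nat.card_Ico, smul_eq_mul]
      exact Nat.mul_le_mul_right _ (by omega)

/-- fix an `s`-subset `I` of `[n]` contained in an interval of
length `s + t`.  The number of observable pairs `(P, Q)` of `s`-subsets of `[n]`,
each contained in an interval of length `s + t`, with `(P ∪ Q) ∩ I ≠ ∅`, is at
most `2·s·(s+t)·n·C(s+t, s)²`. -/
theorem stmt15 (n s t : ℕ) (I : Finset (Fin n))
    (hI : I.card = s) (hIspan : InInterval (s + t) I) :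
    ((Finset.univ.powersetCard s ×ˢ Finset.univ.powersetCard s).filter
      (fun PQ : Finset (Fin n) × Finset (Fin n) =>
        Observable s PQ.1 PQ.2 ∧ InInterval (s + t) PQ.1 ∧ InInterval (s + t) PQ.2 ∧
          ((PQ.1 ∪ PQ.2) ∩ I).Nonempty)).card
      ≤ 2 * s * (s + t) * n * (Nat.choose (s + t) s) ^ 2 := by
  classical
  set C := Nat.choose (s + t) s with hC
  set S := ((Finset.univ.powersetCard s ×ˢ Finset.univ.powersetCard s).filter
      (fun PQ : Finset (Fin n) × Finset (Fin n) =>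
        Observable s PQ.1 PQ.2 ∧ InInterval (s + t) PQ.1 ∧ InInterval (s + t) PQ.2 ∧
          ((PQ.1 ∪ PQ.2) ∩ I).Nonempty)) with hSdef
  rcases Nat.eq_zero_or_pos s with hs | hs
  · have hIe : I = ∅ := Finset.card_eq_zero.mp (by omega)
    have hSe : S = ∅ := by
      rw [hSdef]
      refine Finset.filter_eq_empty_iff.mpr ?_
      rintro PQ _ ⟨-, -, -, hne⟩
      simp [hIe] at hne
    rw [hSe, Finset.card_empty]
    exact Nat.zero_le _
  · set A : Fin n → Finset (Finset (Fin n)) := fun i =>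
      (Finset.univ.powersetCard s).filter
        (fun P : Finset (Fin n) => InInterval (s + t) P ∧ i ∈ P) with hA
    set B : Finset (Finset (Fin n)) :=
      (Finset.univ.powersetCard s).filter
        (fun Q : Finset (Fin n) => InInterval (s + t) Q) with hB
    have hsub : S ⊆ I.biUnion (fun i => S.filter (fun PQ => i ∈ PQ.1 ∨ i ∈ PQ.2)) := by
      intro PQ hPQ
      have h := Finset.mem_filter.mp (hSdef ▸ hPQ)
      obtain ⟨-, -, -, -, x, hx⟩ := h
      rw [Finset.mem_inter, Finset.mem_union] at hx
      exact Finset.mem_biUnion.mpr ⟨x, hx.2, Finset.mem_filter.mpr ⟨hPQ, hx.1⟩⟩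
    have key : ∀ i ∈ I, (S.filter (fun PQ => i ∈ PQ.1 ∨ i ∈ PQ.2)).card
        ≤ 2 * ((s + t) * C * (n * C)) := by
      intro i _
      have hsub2 : S.filter (fun PQ => i ∈ PQ.1 ∨ i ∈ PQ.2)
          ⊆ (A i ×ˢ B) ∪ (B ×ˢ A i) := by
        intro PQ h
        rw [Finset.mem_filter] at h
        obtain ⟨hS', hor⟩ := h
        rw [hSdef, Finset.mem_filter, Finset.mem_product] at hS'
        obtain ⟨⟨hP, hQ⟩, -, hP2, hQ2, -⟩ := hS'
        rw [Finset.mem_union, Finset.mem_product, Finset.mem_product]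
        rcases hor with h | h
        · exact Or.inl ⟨Finset.mem_filter.mpr ⟨hP, hP2, h⟩,
            Finset.mem_filter.mpr ⟨hQ, hQ2⟩⟩
        · exact Or.inr ⟨Finset.mem_filter.mpr ⟨hP, hP2⟩,
            Finset.mem_filter.mpr ⟨hQ, hQ2, h⟩⟩
      have hAi : (A i).card ≤ (s + t) * C := A_bound n s t i
      have hBc : B.card ≤ n * C := B_bound n s t hs
      calc (S.filter (fun PQ => i ∈ PQ.1 ∨ i ∈ PQ.2)).card
          ≤ ((A i ×ˢ B) ∪ (B ×ˢ A i)).card := Finset.card_le_card hsub2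
        _ ≤ (A i ×ˢ B).card + (B ×ˢ A i).card := Finset.card_union_le _ _
        _ = (A i).card * B.card + B.card * (A i).card := by
            rw [Finset.card_product, Finset.card_product]
        _ ≤ (s + t) * C * (n * C) + (n * C) * ((s + t) * C) :=
            Nat.add_le_add (Nat.mul_le_mul hAi hBc) (Nat.mul_le_mul hBc hAi)
        _ = 2 * ((s + t) * C * (n * C)) := by ring
    calc S.card
        ≤ (I.biUnion (fun i => S.filter (fun PQ => i ∈ PQ.1 ∨ i ∈ PQ.2))).card :=
          Finset.card_le_card hsub
      _ ≤ ∑ i ∈ I, (S.filter (fun PQ => i ∈ PQ.1 ∨ i ∈ PQ.2)).card :=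
          Finset.card_biUnion_le
      _ ≤ ∑ i ∈ I, 2 * ((s + t) * C * (n * C)) := Finset.sum_le_sum key
      _ = s * (2 * ((s + t) * C * (n * C))) := by
          rw [Finset.sum_const, hI, smul_eq_mul]
      _ = 2 * s * (s + t) * n * C ^ 2 := by ring
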